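/- Let G be a group and let F, K ⊆ G be finite subsets. Then |∂_K F| ≤ |K| · |KF △ F|. -/

import Mathlib

open Pointwise

/-- The `K`-boundary of a finite subset `F` of a group: `∂_K F = {f ∈ F : Kf ⊄ F}`. -/
def Finset.groupBoundary {G : Type*} [Group G] [DecidableEq G] (K F : Finset G) : Finset G :=
  F.filter fun f => ¬ ∀ k ∈ K, k * f ∈ F

/-- Let `G` be a group and `F, K ⊆ G` finite subsets.
Then `|∂_K F| ≤ |K| · |KF △ F|`. -/
theorem card_groupBoundary_le {G : Type*} [Group G] [DecidableEq G] (F K : Finset G) :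
    (Finset.groupBoundary K F).card ≤ K.card * (symmDiff (K * F) F).card := by
  classical
  have hcard : (K ×ˢ (symmDiff (K * F) F)).card = K.card * (symmDiff (K * F) F).card :=
    Finset.card_product _ _
  rw [← hcard]
  set φ : G → G × G := fun x =>
    if hx : ∃ k, k ∈ K ∧ k * x ∉ F then (hx.choose, hx.choose * x) else (1, 1) with hφ
  apply Finset.card_le_card_of_injOn φ
  · intro x hx
    simp only [Finset.groupBoundary, Finset.mem_coe, Finset.mem_filter, not_forall] at hx
    obtain ⟨hxF, hk⟩ := hx
    have hex : ∃ k, k ∈ K ∧ k * x ∉ F := by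
      obtain ⟨k, hk1, hk2⟩ := hk
      exact ⟨k, hk1, hk2⟩
    have hs := hex.choose_spec
    simp only [hφ, dif_pos hex, Finset.mem_coe]
    rw [Finset.mem_product]
    constructor
    · exact hs.1
    · rw [Finset.mem_symmDiff]
      left
      exact ⟨Finset.mul_mem_mul hs.1 hxF, hs.2⟩
  · intro x hx y hy hxy
    have hexx : ∃ k, k ∈ K ∧ k * x ∉ F := by
      have := (Finset.mem_filter.mp hx).2
      push_neg at this
      obtain ⟨k, hk1, hk2⟩ := this
      exact ⟨k, hk1, hk2⟩
    have hexy : ∃ k, k ∈ K ∧ k * y ∉ F := by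
      have := (Finset.mem_filter.mp hy).2
      push_neg at this
      obtain ⟨k, hk1, hk2⟩ := this
      exact ⟨k, hk1, hk2⟩
    simp only [hφ, dif_pos hexx, dif_pos hexy, Prod.mk.injEq] at hxy
    obtain ⟨h1, h2⟩ := hxy
    rw [h1] at h2
    exact mul_left_cancel h2
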